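/- Let k ≥ 2 be an integer, r̄ a residue with 1 ≤ r̄ ≤ k, and A = {a ∈ ℕ : a ≥ 1 and a ≡ r̄ (mod k)}. Suppose that for every residue r modulo k there exists a matrix [[a,b],[c,d]] ∈ G_A with gcd(c, k) = 1 and d ≡ r (mod k). Then for every integer n ≥ 1, the reduction of D_A modulo kⁿ is all of ℤ/kⁿℤ. -/

import Mathlib

/-- The generator matrix `[[0,1],[1,a]]`. -/
def cfGen (a : ℕ) : Matrix (Fin 2) (Fin 2) ℤ := !![0, 1; 1, (a : ℤ)]

/-- The semigroup `G_A`: all nonempty finite products of the generators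
`[[0,1],[1,a]]` with `a ∈ A`. -/
def GSemigroup (A : Set ℕ) : Set (Matrix (Fin 2) (Fin 2) ℤ) :=
  { M | ∃ l : List ℕ, l ≠ [] ∧ (∀ a ∈ l, a ∈ A) ∧ M = (l.map cfGen).prod }

/-- The set `D_A` of bottom-right entries of matrices in `G_A`. -/
def Denoms (A : Set ℕ) : Set ℕ :=
  { d | ∃ M ∈ GSemigroup A, M 1 1 = (d : ℤ) }

lemma prod_entries_nonneg (l : List ℕ) : ∀ i j, 0 ≤ (l.map cfGen).prod i j := by
  induction l with
  | nil => intro i j; fin_cases i <;> fin_cases j <;> simp [Matrix.one_apply]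
  | cons a l ih =>
    intro i j
    rw [List.map_cons, List.prod_cons, Matrix.mul_apply]
    refine Finset.sum_nonneg fun c _ => mul_nonneg ?_ (ih c j)
    fin_cases i <;> fin_cases c <;> simp [cfGen]

lemma prod_map_mod (k rr : ℕ) (l : List ℕ) (hl : ∀ a ∈ l, a ≡ rr [MOD k]) :
    (Int.castRingHom (ZMod k)).mapMatrix ((l.map cfGen).prod)
      = (!![0,1;1,(rr : ZMod k)]) ^ l.length := by
  induction l with
  | nil => simp
  | cons a l ih =>
    simp only [List.map_cons, List.prod_cons, map_mul, List.length_cons]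
    rw [ih (fun b hb => hl b (by simp [hb])), pow_succ']
    congr 1
    have hcast : (a : ZMod k) = (rr : ZMod k) := by
      rw [ZMod.natCast_eq_natCast_iff]; exact hl a (by simp)
    ext i j
    fin_cases i <;> fin_cases j <;>
      simp [cfGen, RingHom.mapMatrix_apply, Matrix.map_apply, hcast]

lemma isUnit_cast_of_gcd (z : ℤ) (k m : ℕ) (h : Int.gcd z k = 1) :
    IsUnit ((z : ZMod (k^m))) := by
  have h2 : IsCoprime z (k:ℤ) := Int.isCoprime_iff_gcd_eq_one.mpr h
  have h3 : IsCoprime z ((k:ℤ)^m) := h2.pow_right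
  obtain ⟨u, v, huv⟩ := h3
  have hc := congrArg (Int.cast : ℤ → ZMod (k^m)) huv
  push_cast at hc
  have hz : ((k : ZMod (k^m)))^m = 0 := by
    rw [← Nat.cast_pow, ZMod.natCast_self]
  rw [hz, mul_zero, add_zero] at hc
  exact IsUnit.of_mul_eq_one _ (by rw [mul_comm] at hc; exact hc)


/-- For `A = {a ≥ 1 : a ≡ r̄ (mod k)}`: if every residue `r mod k` arises as the
bottom-right entry of some `[[a,b],[c,d]] ∈ G_A` with `gcd(c,k) = 1`, then `D_A`
surjects onto `ℤ/kⁿℤ` for every `n ≥ 1`. -/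
theorem surjective_prime_power_of_coprime_bottom_row (k r : ℕ)
    (hk : 2 ≤ k) (hr1 : 1 ≤ r) (hrk : r ≤ k)
    (h : ∀ x : ZMod k, ∃ γ ∈ GSemigroup {a : ℕ | 1 ≤ a ∧ a ≡ r [MOD k]},
      Int.gcd (γ 1 0) (k : ℤ) = 1 ∧ ((γ 1 1 : ℤ) : ZMod k) = x) :
    ∀ n : ℕ, 1 ≤ n → ∀ x : ZMod (k ^ n),
      ∃ d ∈ Denoms {a : ℕ | 1 ≤ a ∧ a ≡ r [MOD k]}, (d : ZMod (k ^ n)) = x := by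
  intro n hn x
  haveI : NeZero k := ⟨by omega⟩
  haveI : NeZero (k^n) := ⟨pow_ne_zero n (by omega)⟩
  have hdvd : (k : ℕ) ∣ k^n := dvd_pow_self k (by omega)
  set xk : ZMod k := ZMod.castHom hdvd (ZMod k) x with hxk
  obtain ⟨γ, ⟨lγ, hlne, hlA, hγprod⟩, hgcd, hd⟩ := h xk
  set Mk : Matrix (Fin 2) (Fin 2) (ZMod k) := !![0,1;1,(r:ZMod k)] with hMkdef
  set φ : Matrix (Fin 2) (Fin 2) ℤ →+* Matrix (Fin 2) (Fin 2) (ZMod k) :=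
      (Int.castRingHom (ZMod k)).mapMatrix with hφdef
  have hdetMk : IsUnit Mk := by
    apply (Matrix.isUnit_iff_isUnit_det _).mpr
    have : Mk.det = -1 := by simp [hMkdef, Matrix.det_fin_two_of]
    rw [this]; exact IsUnit.neg isUnit_one
  obtain ⟨u, hu⟩ := hdetMk
  set N := orderOf u with hNdef
  have hN1 : 1 ≤ N := orderOf_pos u
  have hMkN : Mk ^ N = 1 := by
    rw [← hu, ← Units.val_pow_eq_pow_val, pow_orderOf_eq_one, Units.val_one]
  set m := lγ.length with hmdef
  have hm1 : 1 ≤ m := List.length_pos_iff.mpr hlne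
  -- image of γ
  have hφγ : φ γ = Mk ^ m := by
    rw [hγprod]
    exact prod_map_mod k r lγ (fun a ha => (hlA a ha).2)
  have hφgen : ∀ a : ℕ, a ≡ r [MOD k] → φ (cfGen a) = Mk := by
    intro a ha
    have := prod_map_mod k r [a] (by simpa using ha)
    rw [hφdef, hMkdef]; simpa using this
  -- V and its entries
  set V : Matrix (Fin 2) (Fin 2) ℤ := γ * (cfGen r)^(N-1) with hVdef
  set B := V 0 1 with hBdef
  set D := V 1 1 with hDdef
  have hφV : φ V = Mk ^ (m - 1) := by
    rw [hVdef, map_mul, hφγ, map_pow, hφgen r Nat.ModEq.rfl, ← pow_add,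
      show m + (N-1) = (m-1) + N by omega, pow_add, hMkN, mul_one]
  -- D is congruent to γ 1 0 mod k
  have hpow10 : (Mk ^ m) 1 0 = (Mk ^ (m-1)) 1 1 := by
    conv_lhs => rw [show m = (m-1) + 1 by omega, pow_succ]
    rw [Matrix.mul_apply, Fin.sum_univ_two]
    simp [hMkdef]
  have hDcast : ((D : ℤ) : ZMod k) = ((γ 1 0 : ℤ) : ZMod k) := by
    have h1 : ((D : ℤ) : ZMod k) = (φ V) 1 1 := by
      simp [hφdef, RingHom.mapMatrix_apply, Matrix.map_apply, hDdef]
    have h2 : ((γ 1 0 : ℤ) : ZMod k) = (φ γ) 1 0 := by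
      simp [hφdef, RingHom.mapMatrix_apply, Matrix.map_apply]
    rw [h1, h2, hφγ, hφV, hpow10]
  have hgcdD : Int.gcd D k = 1 := by
    have hmod : D ≡ γ 1 0 [ZMOD (k:ℤ)] := (ZMod.intCast_eq_intCast_iff _ _ _).mp hDcast
    obtain ⟨s, hs⟩ := hmod.dvd
    have hD : D = γ 1 0 + (k:ℤ) * (-s) := by linarith [hs]
    have hco : IsCoprime (γ 1 0 : ℤ) (k:ℤ) := Int.isCoprime_iff_gcd_eq_one.mpr hgcd
    have hcoD : IsCoprime D (k:ℤ) := by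
      rw [hD]; exact hco.add_mul_left_left (-s)
    exact Int.isCoprime_iff_gcd_eq_one.mp hcoD
  have hDu : IsUnit ((D : ℤ) : ZMod (k^n)) := isUnit_cast_of_gcd D k n hgcdD
  obtain ⟨Du, hDu'⟩ := hDu
  -- (B + r*D) is congruent to x modulo k
  have hBrD : ((B + (r:ℤ) * D : ℤ) : ZMod k) = xk := by
    have hmul : B + (r:ℤ) * D = (cfGen r * V) 1 1 := by
      rw [Matrix.mul_apply, Fin.sum_univ_two]
      simp [cfGen, hBdef, hDdef]
    have hφw : φ (cfGen r * V) = Mk ^ m := by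
      rw [map_mul, hφgen r Nat.ModEq.rfl, hφV, ← pow_succ']
      congr 1
      omega
    have h1 : ((B + (r:ℤ)*D : ℤ) : ZMod k) = (φ (cfGen r * V)) 1 1 := by
      rw [hmul]; simp [hφdef, RingHom.mapMatrix_apply, Matrix.map_apply]
    have h2 : (φ γ) 1 1 = ((γ 1 1 : ℤ) : ZMod k) := by
      simp [hφdef, RingHom.mapMatrix_apply, Matrix.map_apply]
    rw [h1, hφw, ← hφγ, h2, hd]
  -- the discrepancy e and the parameter t
  set e : ZMod (k^n) := x - ((B + (r:ℤ)*D : ℤ) : ZMod (k^n)) with hedef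
  have he0 : (e.val : ZMod k) = 0 := by
    have hcast : ZMod.castHom hdvd (ZMod k) e = 0 := by
      rw [hedef, map_sub, map_intCast, hBrD, hxk, sub_self]
    rw [ZMod.natCast_val, ← ZMod.castHom_apply (h := hdvd), hcast]
  have hkdvd : k ∣ e.val := (ZMod.natCast_eq_zero_iff e.val k).mp he0
  set f : ℕ := e.val / k with hfdef
  have hkf : k * f = e.val := Nat.mul_div_cancel' hkdvd
  set t : ℕ := ((f : ZMod (k^n)) * (↑Du⁻¹ : ZMod (k^n))).val with htdef
  -- the final matrix
  set a : ℕ := r + k * t with hadef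
  set M : Matrix (Fin 2) (Fin 2) ℤ := cfGen a * V with hMdef
  have hM11 : M 1 1 = B + (a:ℤ) * D := by
    rw [hMdef, Matrix.mul_apply, Fin.sum_univ_two]
    simp [cfGen, hBdef, hDdef]
  -- M 1 1 is congruent to x mod k^n
  have hM11x : ((M 1 1 : ℤ) : ZMod (k^n)) = x := by
    rw [hM11, hadef]
    push_cast
    have ht : ((t : ℕ) : ZMod (k^n)) = (f : ZMod (k^n)) * (↑Du⁻¹ : ZMod (k^n)) := by
      rw [htdef, ZMod.natCast_val, ZMod.cast_id]
    have he' : ((e.val : ℕ) : ZMod (k^n)) = e := by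
      rw [ZMod.natCast_val, ZMod.cast_id]
    have hke : (k : ZMod (k^n)) * (f : ZMod (k^n)) = e := by
      rw [← Nat.cast_mul, hkf, he']
    calc (B : ZMod (k^n)) + ((r : ZMod (k^n)) + (k:ZMod (k^n)) * (t:ZMod (k^n))) * ((D:ℤ) : ZMod (k^n))
        = ((B + (r:ℤ)*D : ℤ) : ZMod (k^n)) + ((k:ZMod (k^n)) * (t:ZMod (k^n))) * ((D:ℤ) : ZMod (k^n)) := by
          push_cast; ring
      _ = ((B + (r:ℤ)*D : ℤ) : ZMod (k^n)) + e := by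
          rw [ht, ← hDu']
          rw [show (k:ZMod (k^n)) * ((f:ZMod (k^n)) * (↑Du⁻¹:ZMod (k^n))) * (Du : ZMod (k^n))
              = (k:ZMod (k^n)) * (f:ZMod (k^n)) * ((↑Du⁻¹ : ZMod (k^n)) * (Du: ZMod (k^n))) by ring]
          rw [Units.inv_mul, mul_one, hke]
      _ = x := by rw [hedef]; ring
  -- membership of M in the semigroup
  have hMG : M ∈ GSemigroup {a : ℕ | 1 ≤ a ∧ a ≡ r [MOD k]} := by
    refine ⟨a :: (lγ ++ List.replicate (N-1) r), by simp, ?_, ?_⟩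
    · intro b hb
      rcases List.mem_cons.mp hb with hb | hb
      · subst hb
        exact ⟨by omega, by
          show (r + k * t) % k = r % k
          simp [Nat.add_mul_mod_self_left]⟩
      · rcases List.mem_append.mp hb with hb | hb
        · exact hlA b hb
        · rw [List.eq_of_mem_replicate hb]
          exact ⟨hr1, Nat.ModEq.rfl⟩
    · rw [List.map_cons, List.prod_cons, List.map_append, List.prod_append,
        List.map_replicate, List.prod_replicate, hMdef, hVdef, hγprod]
  -- conclude
  have hnonneg : 0 ≤ M 1 1 := by
    obtain ⟨l, _, _, hMl⟩ := hMG
    rw [hMl]; exact prod_entries_nonneg l 1 1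
  refine ⟨(M 1 1).toNat, ⟨M, hMG, ?_⟩, ?_⟩
  · rw [Int.toNat_of_nonneg hnonneg]
  · have : (((M 1 1).toNat : ℤ) : ZMod (k^n)) = x := by
      rw [Int.toNat_of_nonneg hnonneg, hM11x]
    rw [← this]
    push_cast
    rfl
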